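/- Every positive integer n can be written uniquely as a sum F_{n_1} + F_{n_2} + ⋯ + F_{n_k} of Fibonacci numbers, where n_1 ≥ 2 and n_{j} > n_{j-1} + 1 for every j with 2 ≤ j ≤ k (Zeckendorf representation: no two consecutive Fibonacci indices are used and index 0, 1 are excluded). -/

import Mathlib

open List Nat

private instance : IsTrans ℕ fun a b ↦ b + 2 ≤ a where
  trans _a _b _c hba hcb := hcb.trans <| le_self_add.trans hba

private lemma zeck_pairwise {l : List ℕ} (hl : l.IsZeckendorfRep) :
    (l ++ [0]).Pairwise (fun a b => b + 2 ≤ a) := by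
  rw [List.IsZeckendorfRep, List.isChain_iff_pairwise] at hl
  exact hl

private lemma zeck_key (s : Finset ℕ) (h2 : ∀ i ∈ s, 2 ≤ i) (hc : ∀ i ∈ s, i + 1 ∉ s) :
    Nat.zeckendorf (∑ i ∈ s, Nat.fib i) = (s.sort (· ≤ ·)).reverse := by
  set l : List ℕ := s.sort (· ≤ ·) with hldef
  have hpl : l.Pairwise (fun a b => a + 2 ≤ b) := by
    refine (s.sortedLT_sort.pairwise).imp_of_mem ?_
    intro a b ha hb hab
    rw [← hldef, Finset.mem_sort] at ha hb
    rcases Nat.lt_or_ge b (a + 2) with h | h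
    · have : b = a + 1 := by omega
      exact absurd (this ▸ hb) (hc a ha)
    · exact h
  have hz : (l.reverse).IsZeckendorfRep := by
    rw [List.IsZeckendorfRep]
    have he : l.reverse ++ [0] = (0 :: l).reverse := by simp
    rw [he, List.isChain_reverse]
    refine List.Pairwise.isChain ?_
    refine List.pairwise_cons.2 ⟨?_, ?_⟩
    · intro a ha
      have : 2 ≤ a := h2 a (by rwa [← Finset.mem_sort (α := ℕ) (· ≤ ·)])
      simpa [flip] using this
    · exact hpl.imp (fun h => by simpa [flip] using h)
  have hsum : ∑ i ∈ s, Nat.fib i = (l.map Nat.fib).sum := by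
    rw [← List.sum_toFinset _ (s.sort_nodup (· ≤ ·)), ← hldef, Finset.sort_toFinset]
  have := Nat.zeckendorf_sum_fib hz
  rwa [List.map_reverse, List.sum_reverse, ← hsum] at this

private lemma zeck_eq (s : Finset ℕ) (h2 : ∀ i ∈ s, 2 ≤ i) (hc : ∀ i ∈ s, i + 1 ∉ s) :
    s = (Nat.zeckendorf (∑ i ∈ s, Nat.fib i)).toFinset := by
  rw [zeck_key s h2 hc, List.toFinset_reverse, Finset.sort_toFinset]

theorem stmt_18 (n : ℕ) (hn : 1 ≤ n) :
    ∃! s : Finset ℕ, (∀ i ∈ s, 2 ≤ i) ∧ (∀ i ∈ s, i + 1 ∉ s) ∧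
      ∑ i ∈ s, Nat.fib i = n := by
  have hz := Nat.isZeckendorfRep_zeckendorf n
  have hp := zeck_pairwise hz
  set l := Nat.zeckendorf n with hl
  have hp' : l.Pairwise (fun a b => b + 2 ≤ a) := (List.pairwise_append.1 hp).1
  have h2 : ∀ i ∈ l, 2 ≤ i := by
    intro i hi
    have h0 := (List.pairwise_append.1 hp).2.2 i hi 0 (List.mem_singleton_self 0)
    omega
  have hnd : l.Nodup := by
    have hne : l.Pairwise (· ≠ ·) := hp'.imp fun h => by omega
    exact hne
  have hsym : l.Pairwise (fun a b => a + 2 ≤ b ∨ b + 2 ≤ a) := hp'.imp Or.inr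
  have : Std.Symm fun a b : ℕ => a + 2 ≤ b ∨ b + 2 ≤ a := ⟨fun a b h => h.symm⟩
  have hforall := hsym.forall
  refine ⟨l.toFinset, ⟨?_, ?_, ?_⟩, ?_⟩
  · intro i hi; exact h2 i (List.mem_toFinset.1 hi)
  · intro i hi hi1
    rw [List.mem_toFinset] at hi hi1
    have := hforall hi hi1 (by omega)
    omega
  · rw [List.sum_toFinset _ hnd]
    exact Nat.sum_zeckendorf_fib n
  · intro s ⟨hs2, hsc, hsum⟩
    rw [zeck_eq s hs2 hsc, hsum]
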